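/- Let m and n be coprime integers with 1 < m < n (so that n' ≥ 1 below), let (m', n') = f(m,n), and let T(0) = 0, T(i) = T(i−1) + len(B_{χ_{m',n'}(i)}) for i ∈ {1,…,n'} be the block boundaries, so that the i-th elementary subsegment of χ_{m,n} occupies positions {T(i−1)+1, …, T(i)}. Then for every i ∈ {1,…,n'} and every j with T(i−1)+1 ≤ j ≤ T(i)−1, one has 𝐚^j <_lex 𝐚^{T(i−1)} and 𝐚^j <_lex 𝐚^{T(i)}, where 𝐚^k are the a-sequences of χ_{m,n} and the index T(0) = 0 is interpreted as n (by n-periodicity). -/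

import Mathlib

/-- `chi m n i = ⌊im/n⌋ − ⌊(i−1)m/n⌋` (floor division over `ℤ`); this formula is
automatically `n`-periodic in `i`. -/
def chi (m n : ℕ) (i : ℤ) : ℤ := Int.fdiv (i * m) n - Int.fdiv ((i - 1) * m) n

/-- The Euclidean step `f(m,n)`. -/
def euclStep (m n : ℕ) : ℕ × ℕ :=
  if 2 * m ≤ n then (m * (n / m + 1) - n, m) else (n - (n - m) * (n / (n - m)), n - m)

/-- The blocks `B₁, B₀` associated to `(m,n)`. -/
def block (m n : ℕ) (b : ℤ) : List ℤ :=
  if 2 * m ≤ n then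
    if b = 1 then List.replicate (n / m - 1) 0 ++ [1] else List.replicate (n / m) 0 ++ [1]
  else
    if b = 1 then 0 :: List.replicate (n / (n - m)) 1
    else 0 :: List.replicate (n / (n - m) - 1) 1

/-- The block boundaries: `T(i) = len(B_{χ_{m',n'}(1)}) + ⋯ + len(B_{χ_{m',n'}(i)})`
where `(m', n') = f(m,n)`; so `T(0) = 0` and `T(i) = T(i−1) + len(B_{χ_{m',n'}(i)})`. -/
def Tb (m n : ℕ) (i : ℕ) : ℕ :=
  ∑ k ∈ Finset.range i,
    (block m n (chi (euclStep m n).1 (euclStep m n).2 ((k : ℤ) + 1))).length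

/-- The a-sequence `𝐚^j` of a (periodic) function `χ : ℤ → ℤ`: `𝐚^j(k) = χ(j − k)`. -/
def aSeq (χ : ℤ → ℤ) (j : ℤ) : ℕ → ℤ := fun k => χ (j - k)

/-- Lexicographic order on sequences `ℕ → ℤ`. -/
def LexLt (f g : ℕ → ℤ) : Prop :=
  ∃ k₀ : ℕ, (∀ k < k₀, f k = g k) ∧ f k₀ < g k₀

namespace St7


lemma emod_shift (M N x : ℤ) (h0 : 0 ≤ M) (h1 : M < N) :
    (x - M) % N = (if x % N < M then x % N - M + N else x % N - M) := by
  have hN : 0 < N := lt_of_le_of_lt h0 h1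
  have hx := Int.emod_nonneg x (ne_of_gt hN)
  have hx2 := Int.emod_lt_of_pos x hN
  have hd : (x - M) % N = ((x % N) - M) % N := by
    rw [Int.sub_emod, Int.emod_eq_of_lt h0 h1]
  rw [hd]
  split
  · rename_i hlt
    have : (x % N - M) % N = ((x % N - M + N)) % N := by
      simpa using (Int.add_mul_emod_self_left (a := x % N - M) (b := N) (c := 1)).symm
    rw [this, Int.emod_eq_of_lt (by omega) (by omega)]
  · rename_i hge
    rw [Int.emod_eq_of_lt (by omega) (by omega)]

lemma chi_eq (m n : ℕ) (hn : 0 < n) (h1 : m < n) (x : ℤ) :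
    chi m n x = if (x * m) % n < (m : ℤ) then 1 else 0 := by
  have hn' : (0:ℤ) < n := by exact_mod_cast hn
  unfold chi
  rw [Int.fdiv_eq_ediv_of_nonneg _ (le_of_lt hn'), Int.fdiv_eq_ediv_of_nonneg _ (le_of_lt hn')]
  have hxm : (x - 1) * m = x * m - m := by ring
  rw [hxm]
  set a := x * m with ha
  have hR0 := Int.emod_nonneg a (ne_of_gt hn')
  have hRn := Int.emod_lt_of_pos a hn'
  have hae : (n:ℤ) * (a / n) + a % n = a := Int.mul_ediv_add_emod a n
  by_cases hc : a % n < (m:ℤ)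
  · have : (a - m) / n = a / n - 1 ∧ (a - m) % n = a % n - m + n :=
      (Int.ediv_emod_unique hn').mpr ⟨by linarith, by omega, by omega⟩
    rw [this.1]; simp [hc]
  · have : (a - m) / n = a / n ∧ (a - m) % n = a % n - m :=
      (Int.ediv_emod_unique hn').mpr ⟨by linarith, by omega, by omega⟩
    rw [this.1]; simp [hc]

lemma lex_of_gt (m n : ℕ) (hm0 : 0 < m) (hmn : m < n) (hcop : Nat.Coprime m n)
    (p q : ℤ) (h : (q * m) % n < (p * m) % n) :
    LexLt (aSeq (chi m n) p) (aSeq (chi m n) q) := by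
  classical
  have hn : 0 < n := lt_trans hm0 hmn
  have hnz : ((n:ℤ)) ≠ 0 := by positivity
  have hnz' : (0:ℤ) < n := by exact_mod_cast hn
  have hmz : (0:ℤ) < m := by exact_mod_cast hm0
  have hmn' : (m:ℤ) < n := by exact_mod_cast hmn
  set P : ℕ → ℤ := fun k => ((p - k) * m) % n with hP
  set Q : ℕ → ℤ := fun k => ((q - k) * m) % n with hQ
  have hPb : ∀ k, 0 ≤ P k ∧ P k < n := fun k =>
    ⟨Int.emod_nonneg _ hnz, Int.emod_lt_of_pos _ hnz'⟩
  have hQb : ∀ k, 0 ≤ Q k ∧ Q k < n := fun k =>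
    ⟨Int.emod_nonneg _ hnz, Int.emod_lt_of_pos _ hnz'⟩
  have hP0 : P 0 = (p * m) % n := by simp [hP]
  have hQ0 : Q 0 = (q * m) % n := by simp [hQ]
  have hstep : ∀ (x : ℤ) (k : ℕ),
      ((x - ((k:ℤ)+1)) * m) % n =
        (if ((x - k) * m) % n < (m:ℤ) then ((x - k) * m) % n - m + n
         else ((x - k) * m) % n - m) := by
    intro x k
    have hx : (x - ((k:ℤ)+1)) * m = (x - k) * m - m := by ring
    rw [hx, emod_shift (m:ℤ) (n:ℤ) _ (le_of_lt hmz) hmn']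
  set d : ℤ := P 0 - Q 0 with hdd
  have hd0 : 0 < d := by rw [hdd, hP0, hQ0]; omega
  have hdn : d < n := by have h1 := hPb 0; have h2 := hQb 0; omega
  have hcong : ∀ k, (P k - Q k) ≡ d [ZMOD (n:ℤ)] := by
    intro k
    have e1 : P k ≡ (p - k) * m [ZMOD (n:ℤ)] := Int.emod_emod_of_dvd _ dvd_rfl
    have e2 : Q k ≡ (q - k) * m [ZMOD (n:ℤ)] := Int.emod_emod_of_dvd _ dvd_rfl
    have e3 : P 0 ≡ (p - (0:ℕ)) * m [ZMOD (n:ℤ)] := Int.emod_emod_of_dvd _ dvd_rfl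
    have e4 : Q 0 ≡ (q - (0:ℕ)) * m [ZMOD (n:ℤ)] := Int.emod_emod_of_dvd _ dvd_rfl
    have heq : ((p - k) * m - (q - k) * m : ℤ) = (p - (0:ℕ)) * m - (q - (0:ℕ)) * m := by
      push_cast; ring
    calc P k - Q k ≡ (p - k) * m - (q - k) * m [ZMOD (n:ℤ)] := e1.sub e2
      _ = (p - (0:ℕ)) * m - (q - (0:ℕ)) * m := heq
      _ ≡ P 0 - Q 0 [ZMOD (n:ℤ)] := (e3.sub e4).symm
  obtain ⟨u, v, huv⟩ : IsCoprime (m:ℤ) (n:ℤ) :=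
    Int.isCoprime_iff_gcd_eq_one.mpr (by simpa using hcop)
  set t : ℤ := if d ≤ (n:ℤ) - m then (m:ℤ) - 1 else (n:ℤ) - d - 1 with htt
  have ht : 0 ≤ t ∧ t < m ∧ (m:ℤ) ≤ t + d ∧ t + d < n := by
    rw [htt]; split <;> omega
  obtain ⟨ht0, ht1, ht2, ht3⟩ := ht
  have hex : ∃ k : ℕ, chi m n (p - k) ≠ chi m n (q - k) := by
    set z : ℤ := (q - t * u) % n with hz
    have hz0 : 0 ≤ z := Int.emod_nonneg _ hnz
    refine ⟨z.toNat, ?_⟩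
    have hzz : (z.toNat : ℤ) = z := Int.toNat_of_nonneg hz0
    obtain ⟨c, hc⟩ : (n:ℤ) ∣ (q - t * u) - z := Int.dvd_self_sub_of_emod_eq hz.symm
    have h2 : ((q - z) * m) ≡ t [ZMOD (n:ℤ)] :=
      Int.modEq_iff_dvd.mpr ⟨t * v - c * m, by linear_combination - m * hc - t * huv⟩
    have hQk : Q z.toNat = t := by
      have : Q z.toNat = ((q - z) * m) % n := by rw [hQ]; simp [hzz]
      rw [this, h2, Int.emod_eq_of_lt ht0 (by omega)]
    have hPk : P z.toNat = t + d := by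
      have h3 : P z.toNat ≡ d + t [ZMOD (n:ℤ)] := by
        have h4 := (hcong z.toNat).add (Int.ModEq.refl (Q z.toNat))
        rw [hQk] at h4
        simpa using h4
      have h5 : P z.toNat % n = (d + t) % n := h3
      rw [Int.emod_eq_of_lt (hPb z.toNat).1 (hPb z.toNat).2,
        Int.emod_eq_of_lt (by omega) (by omega)] at h5
      omega
    rw [chi_eq m n hn hmn, chi_eq m n hn hmn]
    have e1 : ((p - (z.toNat:ℤ)) * m) % n = P z.toNat := rfl
    have e2 : ((q - (z.toNat:ℤ)) * m) % n = Q z.toNat := rfl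
    rw [e1, e2, hPk, hQk]
    rw [if_neg (by omega), if_pos (by omega)]
    omega
  -- take the least index of difference
  set k₀ := Nat.find hex with hk₀def
  have hk₀ := Nat.find_spec hex
  have hmin : ∀ k < k₀, chi m n (p - k) = chi m n (q - k) := fun k hk =>
    not_not.mp (Nat.find_min hex hk)
  have inv : ∀ k, k ≤ k₀ → Q k < P k := by
    intro k
    induction k with
    | zero => intro _; rw [hP0, hQ0]; exact h
    | succ k ih =>
      intro hk
      have hQP := ih (by omega)
      have hchi := hmin k (by omega)
      rw [chi_eq m n hn hmn, chi_eq m n hn hmn] at hchi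
      have e1 : ((p - (k:ℤ)) * m) % n = P k := rfl
      have e2 : ((q - (k:ℤ)) * m) % n = Q k := rfl
      rw [e1, e2] at hchi
      have hiff : (P k < (m:ℤ)) ↔ (Q k < (m:ℤ)) := by
        by_cases h1 : P k < (m:ℤ) <;> by_cases h2 : Q k < (m:ℤ) <;>
          simp [h1, h2] at hchi ⊢
      have eP : P (k+1) = (if P k < (m:ℤ) then P k - m + n else P k - m) := by
        have := hstep p k
        have ecast : P (k+1) = ((p - ((k:ℤ)+1)) * m) % n := by
          rw [hP]; push_cast; ring_nf
        rw [ecast, this]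
      have eQ : Q (k+1) = (if Q k < (m:ℤ) then Q k - m + n else Q k - m) := by
        have := hstep q k
        have ecast : Q (k+1) = ((q - ((k:ℤ)+1)) * m) % n := by
          rw [hQ]; push_cast; ring_nf
        rw [ecast, this]
      by_cases h1 : P k < (m:ℤ)
      · rw [eP, eQ, if_pos h1, if_pos (hiff.mp h1)]; omega
      · rw [eP, eQ, if_neg h1, if_neg (fun h2 => h1 (by omega))]
        omega
  -- conclude
  have hQPk := inv k₀ le_rfl
  have hch1 := chi_eq m n hn hmn (p - k₀)
  have hch2 := chi_eq m n hn hmn (q - k₀)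
  have e1 : ((p - (k₀:ℤ)) * m) % n = P k₀ := rfl
  have e2 : ((q - (k₀:ℤ)) * m) % n = Q k₀ := rfl
  rw [e1] at hch1; rw [e2] at hch2
  have hPm : ¬ (P k₀ < (m:ℤ)) := by
    intro hPm
    apply hk₀
    rw [hch1, hch2, if_pos hPm, if_pos (by omega)]
  have hQm : Q k₀ < (m:ℤ) := by
    by_contra hQm
    apply hk₀
    rw [hch1, hch2, if_neg hPm, if_neg hQm]
  refine ⟨k₀, fun k hk => hmin k hk, ?_⟩
  show chi m n (p - k₀) < chi m n (q - k₀)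
  rw [hch1, hch2, if_neg hPm, if_pos hQm]
  omega



lemma chi_nat (m' n' : ℕ) (k : ℕ) :
    chi m' n' ((k:ℤ) + 1) = (((k+1) * m' / n' : ℕ) : ℤ) - ((k * m' / n' : ℕ) : ℤ) := by
  unfold chi
  rw [Int.fdiv_eq_ediv_of_nonneg _ (by positivity), Int.fdiv_eq_ediv_of_nonneg _ (by positivity)]
  rw [Int.natCast_ediv, Int.natCast_ediv]
  congr 2 <;> push_cast <;> ring

lemma div_steps (m' n' : ℕ) (hmn : m' < n') (k : ℕ) :
    k * m' / n' ≤ (k+1) * m' / n' ∧ (k+1) * m' / n' ≤ k * m' / n' + 1 := by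
  constructor
  · exact Nat.div_le_div_right (Nat.mul_le_mul_right _ (by omega))
  · have h1 : (k+1) * m' ≤ k * m' + n' := by nlinarith
    calc (k+1) * m' / n' ≤ (k * m' + n') / n' := Nat.div_le_div_right h1
      _ = k * m' / n' + 1 := Nat.add_div_right _ (by omega)

/-- Main structural facts about `euclStep` and `Tb`. -/
lemma Tb_props (m n : ℕ) (hm : 1 < m) (hmn : m < n) (hcop : Nat.Coprime m n) :
    (0 < (euclStep m n).2) ∧ ((euclStep m n).2 < n) ∧
    ((euclStep m n).1 < (euclStep m n).2) ∧
    IsCoprime (((euclStep m n).1 : ℤ)) (((euclStep m n).2 : ℤ)) ∧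
    (∀ i, Tb m n i < Tb m n (i+1)) ∧
    (Tb m n (euclStep m n).2 = n) ∧
    (∀ i, ((Tb m n i : ℤ) * m) % n = (((i * (euclStep m n).1) % (euclStep m n).2 : ℕ) : ℤ)) := by
  obtain ⟨u, v, huv⟩ : IsCoprime (m:ℤ) (n:ℤ) :=
    Int.isCoprime_iff_gcd_eq_one.mpr (by simpa using hcop)
  by_cases h2 : 2 * m ≤ n
  · -- case n ≥ 2m
    have hE : euclStep m n = (m * (n / m + 1) - n, m) := by simp [euclStep, h2]
    set q := n / m with hq
    set m' := m * (q + 1) - n with hm'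
    rw [hE]
    simp only
    have hqge : 2 ≤ q := (Nat.le_div_iff_mul_le (by omega)).mpr (by omega)
    have hmod := Nat.mod_add_div n m
    rw [← hq] at hmod
    have hmodlt : n % m < m := Nat.mod_lt _ (by omega)
    have hmodpos : 0 < n % m := by
      rcases Nat.eq_zero_or_pos (n % m) with h | h
      · exfalso
        have : m ∣ n := Nat.dvd_of_mod_eq_zero h
        have : m = 1 := Nat.dvd_one.mp (hcop ▸ Nat.dvd_gcd dvd_rfl this)
        omega
      · exact h
    have hqm : m * (q + 1) = m * q + m := by ring
    have hm'eq : m' = m - n % m := by omega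
    have hkey : m * (q + 1) = n + m' := by omega
    have hm'lt : m' < m := by omega
    have hm'pos : 0 < m' := by omega
    have hkeyZ : ((m':ℕ) : ℤ) = (m:ℤ) * ((q:ℤ) + 1) - n := by
      have h1 : m' + n = m * (q + 1) := by omega
      have h1' : ((m':ℕ):ℤ) + n = (m:ℤ) * ((q:ℤ) + 1) := by exact_mod_cast h1
      linarith
    have hcop' : IsCoprime ((m':ℕ) : ℤ) ((m:ℕ) : ℤ) := by
      refine ⟨-v, u + v * ((q:ℤ) + 1), ?_⟩
      rw [hkeyZ]; linear_combination huv
    -- block lengths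
    set D : ℕ → ℕ := fun i => i * m' / m with hD
    have hlen : ∀ k : ℕ,
        (block m n (chi m' m ((k:ℤ) + 1))).length + D (k+1) = (q + 1) + D k := by
      intro k
      have hds := div_steps m' m hm'lt k
      have hchi := chi_nat m' m k
      rcases Nat.lt_or_ge (D (k+1)) (D k + 1) with hc | hc
      · -- D(k+1) = D k, chi' = 0
        have hDk : D (k+1) = D k := by
          have := hds.1; simp only [hD] at *; omega
        have hchi0 : chi m' m ((k:ℤ) + 1) = 0 := by
          rw [hchi]
          simp only [hD] at hDk
          rw [hDk]; ring
        rw [hchi0]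
        rw [block, if_pos h2, if_neg (by norm_num)]
        simp [← hq]
        omega
      · -- D(k+1) = D k + 1, chi' = 1
        have hDk : D (k+1) = D k + 1 := by
          have := hds.2; simp only [hD] at *; omega
        have hchi1 : chi m' m ((k:ℤ) + 1) = 1 := by
          rw [hchi]
          simp only [hD] at hDk
          rw [hDk]; push_cast; ring
        rw [hchi1]
        rw [block, if_pos h2, if_pos rfl]
        simp [← hq]
        omega
    have hTb : ∀ i, Tb m n i + D i = i * (q + 1) := by
      intro i
      induction i with
      | zero => simp [Tb, hD]
      | succ i ih =>
        have hsum : Tb m n (i+1) = Tb m n i + (block m n (chi m' m ((i:ℤ) + 1))).length := by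
          rw [Tb, Finset.sum_range_succ, ← Tb, hE]
        have hmul : (i+1) * (q+1) = i * (q+1) + (q+1) := by ring
        have := hlen i
        omega
    have hmono : ∀ i, Tb m n i < Tb m n (i+1) := by
      intro i
      have hsum : Tb m n (i+1) = Tb m n i + (block m n (chi m' m ((i:ℤ) + 1))).length := by
        rw [Tb, Finset.sum_range_succ, ← Tb, hE]
      have := hlen i
      have hds := div_steps m' m hm'lt i
      simp only [hD] at *
      omega
    have hDn' : D m = m' := by
      show m * m' / m = m'
      exact Nat.mul_div_cancel_left m' (by omega : 0 < m)
    have hTbn : Tb m n m = n := by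
      have h1 := hTb m
      rw [hDn'] at h1
      have : m * (q+1) = n + m' := hkey
      omega
    refine ⟨by omega, by omega, hm'lt, hcop', hmono, hTbn, ?_⟩
    intro i
    set r := (i * m') % m with hr
    have hrlt : r < m := Nat.mod_lt _ (by omega)
    have hdm := Nat.div_add_mod (i * m') m
    -- (Tb i : ℤ) * m = r + n * i
    have hTbi := hTb i
    have hcast : (Tb m n i : ℤ) * m = (r:ℤ) + (n:ℤ) * i := by
      have c1 : ((Tb m n i : ℕ) : ℤ) + ((D i : ℕ) : ℤ) = (i:ℤ) * ((q:ℤ)+1) := by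
        exact_mod_cast hTbi
      have c2 : ((m:ℕ):ℤ) * (D i) + (r:ℤ) = (i:ℤ) * m' := by
        exact_mod_cast hdm
      have c3 : ((m:ℤ)) * ((q:ℤ)+1) = (n:ℤ) + m' := by exact_mod_cast hkey
      linear_combination (m:ℤ) * c1 - c2 + (i:ℤ) * c3
    rw [hcast]
    rw [Int.add_mul_emod_self_left, Int.emod_eq_of_lt (by positivity) (by exact_mod_cast lt_trans hrlt hmn)]
  · -- case n < 2m
    have hE : euclStep m n = (n - (n - m) * (n / (n - m)), n - m) := by simp [euclStep, h2]
    set n' := n - m with hn'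
    set q := n / n' with hq
    set m' := n - n' * q with hm'
    rw [hE]
    simp only
    have hn'pos : 0 < n' := by omega
    have hn'lt : n' < n := by omega
    have h2n' : 2 * n' ≤ n := by omega
    have hqge : 2 ≤ q := (Nat.le_div_iff_mul_le (by omega)).mpr (by omega)
    have hmod := Nat.mod_add_div n n'
    rw [← hq] at hmod
    have hm'eq : m' = n % n' := by omega
    have hm'lt : m' < n' := by rw [hm'eq]; exact Nat.mod_lt _ (by omega)
    have hkey : n' * q + m' = n := by omega
    have hn'Z : ((n':ℕ) : ℤ) = (n:ℤ) - m := by push_cast; omega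
    have hkeyZ : ((m':ℕ) : ℤ) = (n:ℤ) - (n':ℤ) * (q:ℤ) := by
      have h1 : (n':ℕ) * q + m' = n := hkey
      have h1' : ((n':ℕ):ℤ) * (q:ℤ) + ((m':ℕ):ℤ) = (n:ℤ) := by exact_mod_cast h1
      linarith
    have hcop' : IsCoprime ((m':ℕ) : ℤ) ((n':ℕ) : ℤ) := by
      refine ⟨u + v, u * (q:ℤ) - u + v * q, ?_⟩
      rw [hkeyZ, hn'Z]; linear_combination huv
    set D : ℕ → ℕ := fun i => i * m' / n' with hD
    have hlen : ∀ k : ℕ,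
        (block m n (chi m' n' ((k:ℤ) + 1))).length + D k = q + D (k+1) := by
      intro k
      have hds := div_steps m' n' hm'lt k
      have hchi := chi_nat m' n' k
      rcases Nat.lt_or_ge (D (k+1)) (D k + 1) with hc | hc
      · have hDk : D (k+1) = D k := by
          have := hds.1; simp only [hD] at *; omega
        have hchi0 : chi m' n' ((k:ℤ) + 1) = 0 := by
          rw [hchi]; simp only [hD] at hDk; rw [hDk]; ring
        rw [hchi0]
        rw [block, if_neg h2, if_neg (by norm_num)]
        simp [← hn', ← hq]
        omega
      · have hDk : D (k+1) = D k + 1 := by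
          have := hds.2; simp only [hD] at *; omega
        have hchi1 : chi m' n' ((k:ℤ) + 1) = 1 := by
          rw [hchi]; simp only [hD] at hDk; rw [hDk]; push_cast; ring
        rw [hchi1]
        rw [block, if_neg h2, if_pos rfl]
        simp [← hn', ← hq]
        omega
    have hTb : ∀ i, Tb m n i = i * q + D i := by
      intro i
      induction i with
      | zero => simp [Tb, hD]
      | succ i ih =>
        have hsum : Tb m n (i+1) = Tb m n i + (block m n (chi m' n' ((i:ℤ) + 1))).length := by
          rw [Tb, Finset.sum_range_succ, ← Tb, hE]
        have hmul : (i+1) * q = i * q + q := by ring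
        have := hlen i
        omega
    have hmono : ∀ i, Tb m n i < Tb m n (i+1) := by
      intro i
      have hsum : Tb m n (i+1) = Tb m n i + (block m n (chi m' n' ((i:ℤ) + 1))).length := by
        rw [Tb, Finset.sum_range_succ, ← Tb, hE]
      have := hlen i
      have hds := div_steps m' n' hm'lt i
      simp only [hD] at *
      omega
    have hDn' : D n' = m' := by
      show n' * m' / n' = m'
      exact Nat.mul_div_cancel_left m' (by omega : 0 < n')
    have hTbn : Tb m n n' = n := by
      have h1 := hTb n'
      rw [hDn'] at h1
      have : n' * q = q * n' := by ring
      omega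
    refine ⟨by omega, by omega, hm'lt, hcop', hmono, hTbn, ?_⟩
    intro i
    set r := (i * m') % n' with hr
    have hrlt : r < n' := Nat.mod_lt _ (by omega)
    have hdm := Nat.div_add_mod (i * m') n'
    have hTbi := hTb i
    have hcast : (Tb m n i : ℤ) * m = (r:ℤ) + (n:ℤ) * ((i:ℤ) * q + D i - i) := by
      have c1 : ((Tb m n i : ℕ) : ℤ) = (i:ℤ) * q + (D i : ℤ) := by exact_mod_cast hTbi
      have c2 : ((n':ℕ):ℤ) * (D i) + (r:ℤ) = (i:ℤ) * m' := by exact_mod_cast hdm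
      have c3 : ((n':ℤ)) * q + (m':ℤ) = (n:ℤ) := by exact_mod_cast hkey
      have c4 : (m:ℤ) = (n:ℤ) - n' := by push_cast; omega
      linear_combination ((i:ℤ) * (q:ℤ) + (D i : ℤ)) * c4 + (m:ℤ) * c1 - c2 - (i:ℤ) * c3
    rw [hcast]
    rw [Int.add_mul_emod_self_left, Int.emod_eq_of_lt (by positivity) (by exact_mod_cast lt_trans hrlt hn'lt)]



lemma exists_index (m' n' : ℕ) (hn' : 0 < n') (hcop : IsCoprime ((m':ℕ):ℤ) ((n':ℕ):ℤ))
    (r : ℕ) (hr : r < n') : ∃ i', 1 ≤ i' ∧ i' ≤ n' ∧ (i' * m') % n' = r := by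
  obtain ⟨u, v, huv⟩ := hcop
  have hnz : ((n':ℕ):ℤ) ≠ 0 := by exact_mod_cast hn'.ne'
  have hnz' : (0:ℤ) < (n':ℕ) := by exact_mod_cast hn'
  set z : ℤ := ((r:ℤ) * u) % n' with hz
  have hz0 : 0 ≤ z := Int.emod_nonneg _ hnz
  have hzn : z < n' := Int.emod_lt_of_pos _ hnz'
  set i' : ℕ := if z.toNat = 0 then n' else z.toNat with hi'
  have hi1 : 1 ≤ i' := by rw [hi']; split <;> omega
  have hi2 : i' ≤ n' := by
    rw [hi']; split
    · omega
    · have : (z.toNat : ℤ) < (n' : ℤ) := by rwa [Int.toNat_of_nonneg hz0]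
      omega
  have hcong : ((i':ℕ):ℤ) ≡ (r:ℤ) * u [ZMOD ((n':ℕ):ℤ)] := by
    have h1 : z ≡ (r:ℤ) * u [ZMOD ((n':ℕ):ℤ)] := Int.emod_emod_of_dvd _ dvd_rfl
    rw [hi']; split
    · rename_i h0
      have hz00 : z = 0 := by
        have := Int.toNat_of_nonneg hz0
        omega
      calc ((n':ℕ):ℤ) ≡ 0 [ZMOD ((n':ℕ):ℤ)] := (Int.modEq_iff_dvd.mpr (by simp)).symm
        _ = z := hz00.symm
        _ ≡ (r:ℤ) * u [ZMOD ((n':ℕ):ℤ)] := h1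
    · rw [Int.toNat_of_nonneg hz0]; exact h1
  have hmain : (((i' * m') % n' : ℕ) : ℤ) = ((r:ℕ):ℤ) := by
    have h2 : ((i':ℕ):ℤ) * m' ≡ (r:ℤ) [ZMOD ((n':ℕ):ℤ)] := by
      calc ((i':ℕ):ℤ) * m' ≡ ((r:ℤ) * u) * m' [ZMOD ((n':ℕ):ℤ)] := hcong.mul_right _
        _ ≡ (r:ℤ) [ZMOD ((n':ℕ):ℤ)] := by
            refine Int.modEq_iff_dvd.mpr ⟨(r:ℤ) * v, ?_⟩
            linear_combination -(r:ℤ) * huv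
    calc (((i' * m') % n' : ℕ) : ℤ) = ((i' * m' : ℕ):ℤ) % ((n':ℕ):ℤ) := by push_cast; ring
      _ = (r:ℤ) % ((n':ℕ):ℤ) := by push_cast; exact h2
      _ = ((r:ℕ):ℤ) := Int.emod_eq_of_lt (by positivity) (by exact_mod_cast hr)
  exact ⟨i', hi1, hi2, by exact_mod_cast hmain⟩


end St7

/-- For coprime `1 < m < n`, every index `j` lying strictly inside the
`i`-th elementary subsegment (i.e. `T(i−1)+1 ≤ j ≤ T(i)−1`) satisfies
`𝐚^j <_lex 𝐚^{T(i−1)}` and `𝐚^j <_lex 𝐚^{T(i)}` for the a-sequences of `χ_{m,n}`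
(the index `T(0) = 0` being equivalent to `n` by `n`-periodicity of `chi m n`). -/

theorem interior_aSeq_lt_boundary (m n : ℕ) (hm : 1 < m) (hmn : m < n)
    (hcop : Nat.Coprime m n) :
    ∀ i : ℕ, 1 ≤ i → i ≤ (euclStep m n).2 →
    ∀ j : ℕ, Tb m n (i - 1) + 1 ≤ j → j ≤ Tb m n i - 1 →
      LexLt (aSeq (chi m n) (j : ℤ)) (aSeq (chi m n) ((Tb m n (i - 1) : ℕ) : ℤ)) ∧
      LexLt (aSeq (chi m n) (j : ℤ)) (aSeq (chi m n) ((Tb m n i : ℕ) : ℤ)) := by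
  intro i hi1 hi2 j hj1 hj2
  obtain ⟨hn'pos, hn'lt, hm'lt, hcop', hmono, hTbn, hres⟩ := St7.Tb_props m n hm hmn hcop
  set m' := (euclStep m n).1 with hm'def
  set n' := (euclStep m n).2 with hn'def
  have hM : StrictMono (Tb m n) := strictMono_nat_of_lt_succ hmono
  have hnpos : 0 < n := by omega
  have hnZ : ((n:ℕ):ℤ) ≠ 0 := by exact_mod_cast hnpos.ne'
  have hTb0 : Tb m n 0 = 0 := by simp [Tb]
  have hTbi_pos : Tb m n (i-1) < Tb m n i := hM (by omega)
  have hj_lt : j < Tb m n i := by omega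
  have hj_gt : Tb m n (i-1) < j := by omega
  have hTbiN : Tb m n i ≤ n := by have := hM.monotone hi2; omega
  have hjn : j < n := by omega
  have hjpos : 1 ≤ j := by omega
  -- interior indices have large residue
  have hjr : ((n':ℕ):ℤ) ≤ ((j:ℤ) * m) % n := by
    by_contra hlt
    push_neg at hlt
    have hr0 : 0 ≤ ((j:ℤ) * m) % n := Int.emod_nonneg _ hnZ
    set r : ℕ := (((j:ℤ) * m) % n).toNat with hrdef
    have hrZ : ((r:ℕ):ℤ) = ((j:ℤ) * m) % n := Int.toNat_of_nonneg hr0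
    have hrlt : r < n' := by omega
    obtain ⟨i', hi'1, hi'2, hi'r⟩ := St7.exists_index m' n' hn'pos hcop' r hrlt
    have hres' := hres i'
    rw [hi'r] at hres'
    have hmodeq : ((j:ℤ) * m) ≡ ((Tb m n i' : ℤ) * m) [ZMOD ((n:ℕ):ℤ)] := by
      show ((j:ℤ) * m) % n = ((Tb m n i' : ℤ) * m) % n
      rw [hres', hrZ]
    have hdvd2 : ((n:ℕ):ℤ) ∣ ((Tb m n i' : ℤ) - j) * m := by
      rw [sub_mul]; exact Int.ModEq.dvd hmodeq
    have hcopnm : IsCoprime ((n:ℕ):ℤ) ((m:ℕ):ℤ) :=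
      Int.isCoprime_iff_gcd_eq_one.mpr (by simpa using hcop.symm)
    have hndvd : ((n:ℕ):ℤ) ∣ ((Tb m n i' : ℤ) - j) :=
      hcopnm.dvd_of_dvd_mul_right hdvd2
    have hTbi'1 : 1 ≤ Tb m n i' := by
      have h01 : Tb m n 0 < Tb m n 1 := hmono 0
      have := hM.monotone hi'1
      omega
    have hTbi'n : Tb m n i' ≤ n := by have := hM.monotone hi'2; omega
    obtain ⟨c, hc⟩ := hndvd
    have hc0 : c = 0 := by
      rcases lt_trichotomy c 0 with h | h | h
      · exfalso
        have h1 : c ≤ -1 := by omega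
        have h2 : ((n:ℕ):ℤ) * c ≤ (n:ℤ) * (-1) := by
          apply mul_le_mul_of_nonneg_left h1 (by positivity)
        have h3 : ((Tb m n i' : ℤ) - j) ≥ 1 - n := by
          have h5 : ((j:ℕ):ℤ) < (n:ℤ) := by exact_mod_cast hjn
          have h4 : (1:ℤ) ≤ (Tb m n i' : ℤ) := by exact_mod_cast hTbi'1
          omega
        omega
      · exact h
      · exfalso
        have h1 : (1:ℤ) ≤ c := by omega
        have h2 : (n:ℤ) * 1 ≤ (n:ℤ) * c := by
          apply mul_le_mul_of_nonneg_left h1 (by positivity)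
        have h3 : ((Tb m n i' : ℤ) - j) ≤ (n:ℤ) - 1 := by
          have h4 : ((Tb m n i' : ℕ):ℤ) ≤ (n:ℤ) := by exact_mod_cast hTbi'n
          have h5 : (1:ℤ) ≤ ((j:ℕ):ℤ) := by exact_mod_cast hjpos
          omega
        omega
    rw [hc0, mul_zero] at hc
    have hjTb : j = Tb m n i' := by omega
    have hlow : i - 1 < i' := by
      have := hM.lt_iff_lt.mp (show Tb m n (i-1) < Tb m n i' by omega)
      omega
    have hhigh : i' < i := by
      have := hM.lt_iff_lt.mp (show Tb m n i' < Tb m n i by omega)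
      omega
    omega
  -- boundary residues are small
  have hbound : ∀ b : ℕ, ((Tb m n b : ℤ) * m) % n < ((n':ℕ):ℤ) := by
    intro b
    rw [hres b]
    exact_mod_cast Nat.mod_lt _ hn'pos
  constructor
  · exact St7.lex_of_gt m n (by omega) hmn hcop (j:ℤ) ((Tb m n (i-1) : ℕ) : ℤ)
      (lt_of_lt_of_le (hbound (i-1)) hjr)
  · exact St7.lex_of_gt m n (by omega) hmn hcop (j:ℤ) ((Tb m n i : ℕ) : ℤ)
      (lt_of_lt_of_le (hbound i) hjr)
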